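/- Define F(α) = 4√(α²/n + (1−α)²/m)·C + 2(1−α)·D for constants C > 0, D ≥ 0 and n, m > 0, and let ρ = C/D (for D > 0). If n ≥ 4ρ², then F is minimized over α ∈ [0,1] at α* = 1; otherwise the minimizer is α* = (n/(n+m))·(1 + √(m²/(4ρ²(n+m) − nm))). -/
import Mathlib

open MeasureTheory Real Filter
open scoped NNReal ENNReal
noncomputable def phi (x : ℝ) : ℝ := (Real.sqrt (2*Real.pi))⁻¹ * Real.exp (-x^2/2)
noncomputable def Phi (t : ℝ) : ℝ := ∫ x in Set.Iio t, phi x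

noncomputable def F (n m C D α : ℝ) : ℝ :=
  4 * Real.sqrt (α ^ 2 / n + (1 - α) ^ 2 / m) * C + 2 * (1 - α) * D

lemma cs_aux (x y a b : ℝ) :
    x * a + y * b ≤ Real.sqrt (x ^ 2 + y ^ 2) * Real.sqrt (a ^ 2 + b ^ 2) := by
  calc x * a + y * b ≤ |x * a + y * b| := le_abs_self _
    _ = Real.sqrt ((x * a + y * b) ^ 2) := (Real.sqrt_sq_eq_abs _).symm
    _ ≤ Real.sqrt ((x ^ 2 + y ^ 2) * (a ^ 2 + b ^ 2)) := by
        apply Real.sqrt_le_sqrt; nlinarith [sq_nonneg (x * b - y * a)]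
    _ = _ := Real.sqrt_mul (by positivity) _

lemma master (n m C D β : ℝ) (hn : 0 < n) (hm : 0 < m) (hC : 0 < C)
    (G : ℝ) (hGpos : 0 < G)
    (hG2 : β ^ 2 / n + (1 - β) ^ 2 / m = G ^ 2)
    (hstat : 2 * C * (β / n) - 2 * C * ((1 - β) / m) = D * G) :
    ∀ α : ℝ, F n m C D β ≤ F n m C D α := by
  intro α
  have hsq : Real.sqrt (β ^ 2 / n + (1 - β) ^ 2 / m) = G := by
    rw [hG2, Real.sqrt_sq hGpos.le]
  have hsn : (Real.sqrt n) ^ 2 = n := Real.sq_sqrt hn.le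
  have hsm : (Real.sqrt m) ^ 2 = m := Real.sq_sqrt hm.le
  have hsn0 : Real.sqrt n ≠ 0 := by positivity
  have hsm0 : Real.sqrt m ≠ 0 := by positivity
  have hcs : α * β / n + (1 - α) * (1 - β) / m ≤
      Real.sqrt (α ^ 2 / n + (1 - α) ^ 2 / m) * G := by
    have h := cs_aux (α / Real.sqrt n) ((1 - α) / Real.sqrt m)
      (β / Real.sqrt n) ((1 - β) / Real.sqrt m)
    have e1 : α / Real.sqrt n * (β / Real.sqrt n)
        + (1 - α) / Real.sqrt m * ((1 - β) / Real.sqrt m)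
        = α * β / n + (1 - α) * (1 - β) / m := by
      rw [div_mul_div_comm, div_mul_div_comm, ← pow_two, ← pow_two, hsn, hsm]
    have e2 : (α / Real.sqrt n) ^ 2 + ((1 - α) / Real.sqrt m) ^ 2
        = α ^ 2 / n + (1 - α) ^ 2 / m := by
      rw [div_pow, div_pow, hsn, hsm]
    have e3 : (β / Real.sqrt n) ^ 2 + ((1 - β) / Real.sqrt m) ^ 2
        = β ^ 2 / n + (1 - β) ^ 2 / m := by
      rw [div_pow, div_pow, hsn, hsm]
    rw [e1, e2, e3, hsq] at h
    exact h
  have key : 4 * C * (α * β / n + (1 - α) * (1 - β) / m) + 2 * (1 - α) * D * G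
      = 4 * C * G ^ 2 + 2 * (1 - β) * D * G := by
    linear_combination 2 * (α - β) * hstat + 4 * C * hG2
  unfold F
  rw [hsq]
  set S := Real.sqrt (α ^ 2 / n + (1 - α) ^ 2 / m) with hS
  have h4 : 4 * C * (α * β / n + (1 - α) * (1 - β) / m) ≤ 4 * C * (S * G) :=
    mul_le_mul_of_nonneg_left hcs (by positivity)
  nlinarith [h4, key, hGpos, hC]

theorem stmt13 (n m C D : ℝ) (hn : 0 < n) (hm : 0 < m) (hC : 0 < C) (hD : 0 < D) :
    (4 * (C / D) ^ 2 ≤ n → ∀ α ∈ Set.Icc (0 : ℝ) 1, F n m C D 1 ≤ F n m C D α) ∧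
    (n < 4 * (C / D) ^ 2 → ∀ α ∈ Set.Icc (0 : ℝ) 1,
      F n m C D ((n / (n + m)) *
        (1 + Real.sqrt (m ^ 2 / (4 * (C / D) ^ 2 * (n + m) - n * m)))) ≤ F n m C D α) := by
  constructor
  · -- boundary case: minimizer at α = 1
    intro h α hα
    obtain ⟨hα0, hα1⟩ := hα
    have hr : 0 < Real.sqrt n := Real.sqrt_pos.mpr hn
    have hsn : (Real.sqrt n) ^ 2 = n := Real.sq_sqrt hn.le
    -- 2C ≤ √n * D
    have h2C : 2 * C ≤ Real.sqrt n * D := by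
      have h' : 4 * (C ^ 2 / D ^ 2) * D ^ 2 ≤ n * D ^ 2 := by
        have := mul_le_mul_of_nonneg_right h (sq_nonneg D)
        rw [div_pow] at this
        linarith
      have hD2 : (0:ℝ) < D ^ 2 := by positivity
      have h'' : (2 * C) ^ 2 ≤ (Real.sqrt n * D) ^ 2 := by
        have hq : 4 * (C ^ 2 / D ^ 2) * D ^ 2 = 4 * C ^ 2 := by field_simp
        rw [mul_pow, mul_pow, hsn]
        nlinarith [h', hq]
      calc 2 * C = Real.sqrt ((2 * C) ^ 2) := (Real.sqrt_sq (by positivity)).symm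
        _ ≤ Real.sqrt ((Real.sqrt n * D) ^ 2) := Real.sqrt_le_sqrt h''
        _ = Real.sqrt n * D := Real.sqrt_sq (by positivity)
    -- lower bound for F α
    have hs : α / Real.sqrt n ≤ Real.sqrt (α ^ 2 / n + (1 - α) ^ 2 / m) := by
      calc α / Real.sqrt n ≤ |α / Real.sqrt n| := le_abs_self _
        _ = Real.sqrt ((α / Real.sqrt n) ^ 2) := (Real.sqrt_sq_eq_abs _).symm
        _ = Real.sqrt (α ^ 2 / n) := by rw [div_pow, hsn]
        _ ≤ _ := Real.sqrt_le_sqrt (le_add_of_nonneg_right (by positivity))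
    have hF1 : F n m C D 1 = 4 * Real.sqrt (1 / n) * C := by
      unfold F; norm_num
    have hr1 : Real.sqrt (1 / n) = 1 / Real.sqrt n := by
      rw [one_div, Real.sqrt_inv, one_div]
    have key : 4 * C ≤ 4 * α * C + 2 * (1 - α) * D * Real.sqrt n := by
      nlinarith [mul_nonneg (by linarith : (0:ℝ) ≤ 1 - α)
        (by linarith : (0:ℝ) ≤ Real.sqrt n * D - 2 * C)]
    have step : 4 * (1 / Real.sqrt n) * C ≤ 4 * (α / Real.sqrt n) * C + 2 * (1 - α) * D := by
      have := mul_le_mul_of_nonneg_right key (inv_nonneg.mpr hr.le)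
      calc 4 * (1 / Real.sqrt n) * C = 4 * C * (Real.sqrt n)⁻¹ := by ring
        _ ≤ (4 * α * C + 2 * (1 - α) * D * Real.sqrt n) * (Real.sqrt n)⁻¹ := this
        _ = 4 * (α / Real.sqrt n) * C + 2 * (1 - α) * D := by
            field_simp
    rw [hF1, hr1]
    unfold F
    have := mul_le_mul_of_nonneg_left hs (by positivity : (0:ℝ) ≤ 4 * C)
    calc 4 * (1 / Real.sqrt n) * C ≤ 4 * (α / Real.sqrt n) * C + 2 * (1 - α) * D := step
      _ ≤ 4 * Real.sqrt (α ^ 2 / n + (1 - α) ^ 2 / m) * C + 2 * (1 - α) * D := by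
          nlinarith [this]
  · -- interior case
    intro h α hα
    have hnm : (0:ℝ) < n + m := by linarith
    set t : ℝ := 4 * (C / D) ^ 2 * (n + m) - n * m with ht_def
    have ht : 0 < t := by
      have h1 : 0 < (4 * (C / D) ^ 2 - n) * (n + m) := by
        apply mul_pos (by linarith) hnm
      rw [ht_def]
      nlinarith [h1, pow_pos hn 2]
    set s : ℝ := Real.sqrt t with hs_def
    have hs2 : s ^ 2 = t := Real.sq_sqrt ht.le
    have hspos : 0 < s := Real.sqrt_pos.mpr ht
    have hms : Real.sqrt (m ^ 2 / t) = m / s := by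
      rw [show m ^ 2 / t = (m / s) ^ 2 by rw [div_pow, hs2], Real.sqrt_sq (by positivity)]
    rw [hms]
    set β : ℝ := n / (n + m) * (1 + m / s) with hβ
    have hC2 : 4 * (C / D) ^ 2 = (s ^ 2 + n * m) / (n + m) := by
      rw [eq_div_iff (ne_of_gt hnm), hs2, ht_def]
      ring
    have hG2 : β ^ 2 / n + (1 - β) ^ 2 / m = (2 * C / (D * s)) ^ 2 := by
      have e : (2 * C / (D * s)) ^ 2 = 4 * (C / D) ^ 2 / s ^ 2 := by
        field_simp; ring
      rw [e, hC2, hβ]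
      field_simp
      ring
    have hstat : 2 * C * (β / n) - 2 * C * ((1 - β) / m) = D * (2 * C / (D * s)) := by
      rw [hβ]
      field_simp
      ring
    exact master n m C D β hn hm hC (2 * C / (D * s)) (by positivity) hG2 hstat α
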